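/- Let F be a field, s : K → F an F-linear form on a quadratic étale F-algebra K with kernel exactly F, and let λ ∈ K×. Then the transfer s_*(⟨λ⟩) of the rank-1 quadratic form ⟨λ⟩ over K (the binary quadratic form x ↦ s(λx²) on K viewed as F-vector space) is similar to the binary form ⟨1, -N_{K/F}(λ)⟩ over F, provided char F ≠ 2. -/

import Mathlib

open Module

/-- Let `char F ≠ 2`, `K` a quadratic étale `F`-algebra, `s : K → F` an `F`-linear
form with kernel exactly `F = F·1`, and `λ ∈ K×`.  Then the transfer `s_*(⟨λ⟩)`, i.e. the binary
quadratic form `x ↦ s(λx²)` on `K`, is similar to `⟨1, -N_{K/F}(λ)⟩`: there are `c ≠ 0` and a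
linear isomorphism `φ : F² ≅ K` with `s(λ·(φ p)²) = c·((p 0)² - N_{K/F}(λ)·(p 1)²)`. -/
theorem transfer_of_rank_one_form_similar_to_norm_form
    {F K : Type*} [Field F] [CommRing K] [Algebra F K] [FiniteDimensional F K]
    (hchar : ringChar F ≠ 2)
    (hdim : finrank F K = 2)
    (s : K →ₗ[F] F)
    (hker : LinearMap.ker s = Submodule.span F {(1 : K)})
    (lam : K) (hlam : IsUnit lam) :
    ∃ c : F, c ≠ 0 ∧ ∃ φ : (Fin 2 → F) ≃ₗ[F] K, ∀ p : Fin 2 → F,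
      s (lam * (φ p * φ p)) = c * ((p 0) ^ 2 - Algebra.norm F lam * (p 1) ^ 2) := by
  have hK : Nontrivial K := nontrivial_of_finrank_pos (R := F) (by omega)
  -- s vanishes on 1
  have s1 : s 1 = 0 := by
    have : (1 : K) ∈ LinearMap.ker s := by
      rw [hker]; exact Submodule.mem_span_singleton_self _
    exact this
  -- membership in the kernel
  have hmem : ∀ w : K, s w = 0 → ∃ t : F, w = t • (1 : K) := by
    intro w hw
    have : w ∈ LinearMap.ker s := hw
    rw [hker, Submodule.mem_span_singleton] at this
    obtain ⟨t, ht⟩ := this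
    exact ⟨t, ht.symm⟩
  -- find α with s α = 1
  have hsne : ∃ z : K, s z ≠ 0 := by
    by_contra h
    push_neg at h
    have hk : LinearMap.ker s = ⊤ := by
      ext w; simp [LinearMap.mem_ker, h]
    rw [hker] at hk
    have h1 : finrank F (Submodule.span F {(1 : K)}) = 1 :=
      finrank_span_singleton one_ne_zero
    rw [hk, finrank_top] at h1
    omega
  obtain ⟨z, hz⟩ := hsne
  set α : K := (s z)⁻¹ • z with hα
  have sα : s α = 1 := by
    rw [hα, map_smul, smul_eq_mul, inv_mul_cancel₀ hz]
  -- basis 1, α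
  have hind : LinearIndependent F ![(1 : K), α] := by
    rw [linearIndependent_fin2]
    constructor
    · intro h
      simp only [Matrix.cons_val_one, Matrix.head_cons, Matrix.cons_val_zero] at h
      rw [h, map_zero] at sα
      exact one_ne_zero sα.symm
    · intro t ht
      simp only [Matrix.cons_val_one, Matrix.head_cons, Matrix.cons_val_zero] at ht
      have := congrArg s ht
      rw [map_smul, sα, smul_eq_mul, mul_one, s1] at this
      rw [this, zero_smul] at ht
      exact zero_ne_one ht
  let B : Basis (Fin 2) F K := basisOfLinearIndependentOfCardEqFinrank hind (by simp [hdim])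
  have hB : ⇑B = ![(1 : K), α] := coe_basisOfLinearIndependentOfCardEqFinrank hind _
  have hB0 : B 0 = 1 := by rw [hB]; rfl
  have hB1 : B 1 = α := by rw [hB]; rfl
  -- structure constants
  set v : F := s (α * α) with hv
  obtain ⟨u, hu'⟩ := hmem (α * α - v • α) (by rw [map_sub, map_smul, sα, smul_eq_mul, mul_one, hv, sub_self])
  have hu : α * α = u • (1 : K) + v • α := by rw [← hu']; abel
  set b : F := s lam with hb
  obtain ⟨a, ha'⟩ := hmem (lam - b • α) (by rw [map_sub, map_smul, sα, smul_eq_mul, mul_one, hb, sub_self])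
  have ha : lam = a • (1 : K) + b • α := by rw [← ha']; abel
  -- the key quadratic form computation
  have key : ∀ x y : F, s (lam * ((x • (1 : K) + y • α) * (x • (1 : K) + y • α)))
      = b * x ^ 2 + 2 * (a + b * v) * (x * y) + (b * u + a * v + b * v ^ 2) * y ^ 2 := by
    intro x y
    have hsq : (x • (1 : K) + y • α) * (x • (1 : K) + y • α)
        = (x * x + u * (y * y)) • (1 : K) + (2 * (x * y) + v * (y * y)) • α := by
      simp only [add_mul, mul_add, smul_mul_smul_comm, one_mul, mul_one, hu]
      module
    have h1 : lam * ((x • (1 : K) + y • α) * (x • (1 : K) + y • α))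
        = (a * (x * x + u * (y * y)) + b * (2 * (x * y) + v * (y * y)) * u) • (1 : K)
          + (a * (2 * (x * y) + v * (y * y)) + b * (x * x + u * (y * y))
             + b * (2 * (x * y) + v * (y * y)) * v) • α := by
      rw [hsq, ha]
      simp only [add_mul, mul_add, smul_mul_smul_comm, one_mul, mul_one, hu]
      module
    rw [h1, map_add, map_smul, map_smul, s1, sα]
    simp only [smul_eq_mul, mul_zero, mul_one, zero_add]
    ring
  -- the norm
  have hnorm : Algebra.norm F lam = a ^ 2 + a * b * v - b ^ 2 * u := by
    rw [Algebra.norm_eq_matrix_det B, Matrix.det_fin_two]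
    have e00 : Algebra.leftMulMatrix B lam 0 0 = a := by
      rw [Algebra.leftMulMatrix_eq_repr_mul, hB0, mul_one, ha, ← hB0, ← hB1]
      simp [Basis.repr_self, Finsupp.single_apply]
    have e10 : Algebra.leftMulMatrix B lam 1 0 = b := by
      rw [Algebra.leftMulMatrix_eq_repr_mul, hB0, mul_one, ha, ← hB0, ← hB1]
      simp [Basis.repr_self, Finsupp.single_apply]
    have hmul : lam * α = (b * u) • (1 : K) + (a + b * v) • α := by
      rw [ha, add_mul, smul_mul_assoc, smul_mul_assoc, one_mul, hu]
      module
    have e01 : Algebra.leftMulMatrix B lam 0 1 = b * u := by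
      rw [Algebra.leftMulMatrix_eq_repr_mul, hB1, hmul, ← hB0, ← hB1]
      simp [Basis.repr_self, Finsupp.single_apply]
    have e11 : Algebra.leftMulMatrix B lam 1 1 = a + b * v := by
      rw [Algebra.leftMulMatrix_eq_repr_mul, hB1, hmul, ← hB0, ← hB1]
      simp [Basis.repr_self, Finsupp.single_apply]
    rw [e00, e01, e10, e11]
    ring
  by_cases hbz : b = 0
  · -- λ = a • 1 with a ≠ 0
    have haz : a ≠ 0 := by
      intro h
      rw [ha, hbz, h, zero_smul, zero_smul, add_zero] at hlam
      exact not_isUnit_zero hlam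
    have h2 : (2 : F) ≠ 0 := Ring.two_ne_zero hchar
    set m : Matrix (Fin 2) (Fin 2) F :=
      !![(1 - a * v) / (2 * a), (a + a ^ 2 * v) / (2 * a); 1, -a] with hm
    have hdet : m.det = -1 := by
      rw [hm, Matrix.det_fin_two_of]
      field_simp
      ring
    have hinv : Invertible m := m.invertibleOfIsUnitDet (by rw [hdet]; exact isUnit_one.neg)
    refine ⟨1, one_ne_zero, (m.toLinearEquiv' hinv).trans B.equivFun.symm, ?_⟩
    intro p
    have hφ : ((m.toLinearEquiv' hinv).trans B.equivFun.symm) p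
        = (((1 - a * v) / (2 * a)) * p 0 + ((a + a ^ 2 * v) / (2 * a)) * p 1) • (1 : K)
          + (p 0 + (-a) * p 1) • α := by
      simp [Module.Basis.equivFun_symm_apply, Fin.sum_univ_two, hB0, hB1, hm, Matrix.toLinearEquiv',
        Matrix.mulVec, dotProduct, Fin.sum_univ_two, Matrix.vecHead, Matrix.vecTail]
    rw [hφ, key, hnorm, hbz]
    field_simp
    ring
  · -- b ≠ 0
    set m : Matrix (Fin 2) (Fin 2) F := !![1, -(a + b * v); 0, b] with hm
    have hdet : m.det = b := by rw [hm, Matrix.det_fin_two_of]; ring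
    have hinv : Invertible m := m.invertibleOfIsUnitDet (by rw [hdet]; exact (isUnit_iff_ne_zero).2 hbz)
    refine ⟨b, hbz, (m.toLinearEquiv' hinv).trans B.equivFun.symm, ?_⟩
    intro p
    have hφ : ((m.toLinearEquiv' hinv).trans B.equivFun.symm) p
        = (p 0 + (-(a + b * v)) * p 1) • (1 : K) + (b * p 1) • α := by
      simp [Module.Basis.equivFun_symm_apply, Fin.sum_univ_two, hB0, hB1, hm, Matrix.toLinearEquiv',
        Matrix.mulVec, dotProduct, Fin.sum_univ_two, Matrix.vecHead, Matrix.vecTail]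
    rw [hφ, key, hnorm]
    ring
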